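/- Let F be a rare non-principal filter on ℕ and let X = {x_1 < x_2 < ...} ∈ F. Then there is an infinite subset Y ⊆ X such that X \ Y ∈ F. -/
import Mathlib


open Filter Set

/-- A strategy: maps finite sequences of the opponent's moves to a natural number. -/
abbrev Strat := List ℕ → ℕ

/-- TWO's move in inning `k` (0-indexed) when following strategy `σ` against ONE's
moves `m`: TWO has seen `m 0, …, m k`. -/
def twoFollow (σ : Strat) (m : ℕ → ℕ) (k : ℕ) : ℕ :=
  σ (List.ofFn fun i : Fin (k + 1) => m i)

/-- ONE's move in inning `k` when following strategy `σ` against TWO's moves `n`: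
ONE's move depends on `n 0, …, n (k-1)` (the first move is `σ []`). -/
def oneFollow (σ : Strat) (n : ℕ → ℕ) (k : ℕ) : ℕ :=
  σ (List.ofFn fun i : Fin k => n i)

/-- TWO wins the play `(m 0, n 0, m 1, n 1, …)` of the game `G1(F)`. -/
def TwoWins1 (F : Set (Set ℕ)) (m n : ℕ → ℕ) : Prop :=
  StrictMono n ∧ (∀ N : ℕ, ∃ k, N ≤ k ∧ m k < n k) ∧ Set.range n ∈ F

/-- TWO wins the play `(m 0, n 0, m 1, n 1, …)` of the game `G2(F)`. -/
def TwoWins2 (F : Set (Set ℕ)) (m n : ℕ → ℕ) : Prop :=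
  (∀ᶠ k in Filter.atTop, m k < n k) ∧ Set.range n ∈ F

/-- `σ` is a winning strategy for TWO in `G1(F)`. -/
def TwoWinning1 (F : Set (Set ℕ)) (σ : Strat) : Prop :=
  ∀ m : ℕ → ℕ, TwoWins1 F m (twoFollow σ m)

/-- `σ` is a winning strategy for ONE in `G1(F)`. -/
def OneWinning1 (F : Set (Set ℕ)) (σ : Strat) : Prop :=
  ∀ n : ℕ → ℕ, ¬ TwoWins1 F (oneFollow σ n) n

/-- `σ` is a winning strategy for TWO in `G2(F)`. -/
def TwoWinning2 (F : Set (Set ℕ)) (σ : Strat) : Prop :=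
  ∀ m : ℕ → ℕ, TwoWins2 F m (twoFollow σ m)

/-- `σ` is a winning strategy for ONE in `G2(F)`. -/
def OneWinning2 (F : Set (Set ℕ)) (σ : Strat) : Prop :=
  ∀ n : ℕ → ℕ, ¬ TwoWins2 F (oneFollow σ n) n

/-- `F` is a non-principal filter on `ℕ`: upward closed, closed under finite
intersections, and every member is infinite. -/
def IsNPFilter (F : Set (Set ℕ)) : Prop :=
  (∀ X ∈ F, ∀ Y : Set ℕ, X ⊆ Y → Y ∈ F) ∧
  (∀ X ∈ F, ∀ Y ∈ F, X ∩ Y ∈ F) ∧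
  (∀ X ∈ F, X.Infinite)

/-- `F` is a rare filter: every partition of `ℕ` into disjoint (nonempty) finite sets
admits a selector in `F`. -/
def IsRare (F : Set (Set ℕ)) : Prop :=
  ∀ I : ℕ → Set ℕ, (∀ n, (I n).Finite) → (∀ n, (I n).Nonempty) →
    (Pairwise fun i j => Disjoint (I i) (I j)) → (⋃ n, I n) = Set.univ →
    ∃ X ∈ F, ∀ n, (X ∩ I n).Subsingleton

/-- The subset of Cantor space `2^ℕ` corresponding to the filter `F`. -/
def cantorCoded (F : Set (Set ℕ)) : Set (ℕ → Bool) :=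
  {χ | {n | χ n = true} ∈ F}

/-- The increasing enumeration of `X ⊆ ℕ`. -/
noncomputable def enum (X : Set ℕ) : ℕ → ℕ := Nat.nth (· ∈ X)

/-- `g` eventually dominates `f`. -/
def EvDom (g f : ℕ → ℕ) : Prop := ∀ᶠ k in Filter.atTop, f k < g k

/-- If `F` is rare and `X ∈ F`, there is an infinite `Y ⊆ X` with `X \ Y ∈ F`. -/
theorem stmt16 (F : Set (Set ℕ)) (hF : IsNPFilter F) (h : IsRare F)
    (X : Set ℕ) (hX : X ∈ F) :
    ∃ Y ⊆ X, Y.Infinite ∧ X \ Y ∈ F := by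
  obtain ⟨hup, hint, hinf⟩ := hF
  have hXinf : X.Infinite := hinf X hX
  set e : ℕ → ℕ := Nat.nth (· ∈ X) with he
  have hmono : StrictMono e := Nat.nth_strictMono hXinf
  have hmem : ∀ n, e n ∈ X := fun n => Nat.nth_mem_of_infinite hXinf n
  have hle : ∀ n, n ≤ e n := fun n => hmono.le_apply
  set c : ℕ → ℕ := fun n => if n = 0 then 0 else e (2 * n) with hc
  have hcmono : StrictMono c := by
    intro i j hij
    simp only [hc]
    rcases Nat.eq_zero_or_pos i with rfl | hi
    · have hj : j ≠ 0 := by omega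
      rw [if_pos rfl, if_neg hj]
      have := hle (2 * j)
      omega
    · have hi' : i ≠ 0 := by omega
      have hj' : j ≠ 0 := by omega
      simp only [if_neg hi', if_neg hj']
      exact hmono (by omega)
  have hcle : ∀ n, c n ≤ e (2 * n) := by
    intro n
    rcases Nat.eq_zero_or_pos n with rfl | hn
    · simp [hc]
    · simp only [hc, if_neg (by omega : n ≠ 0)]
      exact le_refl _
  set I : ℕ → Set ℕ := fun n => Set.Ico (c n) (c (n + 1)) with hI
  have hIfin : ∀ n, (I n).Finite := fun n => Set.finite_Ico _ _
  have hIne : ∀ n, (I n).Nonempty := fun n =>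
    Set.nonempty_Ico.mpr (hcmono (Nat.lt_succ_self n))
  have hIdisj : Pairwise fun i j => Disjoint (I i) (I j) := by
    intro i j hij
    rw [Set.disjoint_left]
    rintro x ⟨hx1, hx2⟩ ⟨hx3, hx4⟩
    rcases lt_or_gt_of_ne hij with hlt | hlt
    · have : c (i + 1) ≤ c j := hcmono.monotone (by omega)
      omega
    · have : c (j + 1) ≤ c i := hcmono.monotone (by omega)
      omega
  have hIunion : (⋃ n, I n) = Set.univ := by
    ext m
    simp only [Set.mem_iUnion, Set.mem_univ, iff_true]
    have hc0 : c 0 = 0 := by simp [hc]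
    set P : ℕ → Prop := fun n => c n ≤ m with hP
    have hP0 : P 0 := by simp [hP, hc0]
    set n := Nat.findGreatest P m with hn
    refine ⟨n, ?_, ?_⟩
    · exact Nat.findGreatest_spec (Nat.zero_le m) hP0
    · by_contra hcon
      push_neg at hcon
      have h1 : n < n + 1 := Nat.lt_succ_self n
      have h2 : n + 1 ≤ m := le_trans (le_trans (hcmono.le_apply) hcon) (le_refl m)
      exact Nat.findGreatest_is_greatest h1 h2 hcon
  obtain ⟨S, hSF, hS⟩ := h I hIfin hIne hIdisj hIunion
  refine ⟨X \ S, Set.diff_subset, ?_, ?_⟩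
  · apply Set.infinite_of_not_bddAbove
    rintro ⟨N, hN⟩
    -- both e (2*(N+1)) and e (2*(N+1)+1) lie in I (N+1); not both in S
    set n := N + 1 with hn
    have h1 : e (2 * n) ∈ I n := by
      constructor
      · exact hcle n
      · simp only [hc]
        have : n + 1 ≠ 0 := by omega
        simp only [if_neg this]
        exact hmono (by omega)
    have h2 : e (2 * n + 1) ∈ I n := by
      constructor
      · exact le_trans (hcle n) (hmono.monotone (by omega : 2 * n ≤ 2 * n + 1))
      · simp only [hc]
        have : n + 1 ≠ 0 := by omega
        simp only [if_neg this]
        exact hmono (by omega)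
    have hne : e (2 * n) ≠ e (2 * n + 1) := ne_of_lt (hmono (by omega))
    have : e (2 * n) ∉ S ∨ e (2 * n + 1) ∉ S := by
      by_contra hcon
      push_neg at hcon
      exact hne (hS n ⟨hcon.1, h1⟩ ⟨hcon.2, h2⟩)
    rcases this with h3 | h3
    · have hy : e (2 * n) ∈ X \ S := ⟨hmem _, h3⟩
      have := hN hy
      have := hle (2 * n)
      simp only [upperBounds, Set.mem_setOf_eq] at hN
      omega
    · have hy : e (2 * n + 1) ∈ X \ S := ⟨hmem _, h3⟩
      have := hN hy
      have := hle (2 * n + 1)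
      omega
  · have hXS : X ∩ S ∈ F := hint X hX S hSF
    apply hup _ hXS
    rintro x ⟨hx1, hx2⟩
    exact ⟨hx1, fun hxy => hxy.2 hx2⟩
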